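/- arXiv:1502.07901 — 3 statements merged into one kernel-verified Lean document; each statement's English description precedes it below -/
import Mathlib

section
/- Let ℍ² = {(z,w) ∈ ℂ² : Im z > |w|²} and f(z,w) = (2z + i w², w), which maps ℍ² into ℍ². Then the invariant set of f equals ℍ² ∩ {Re w = 0}; that is, ⋂_{n≥0} f^n(ℍ²) = {(z,w) ∈ ℂ² : Im z > |w|² and Re w = 0}. -/
/-- The Siegel upper half-space `ℍ² = {(z,w) : Im z > |w|²}` in `ℂ²`. -/
def Siegel2 : Set (ℂ × ℂ) := {p : ℂ × ℂ | ‖p.2‖ ^ 2 < p.1.im}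

/-- The map `f(z,w) = (2z + i w², w)`. -/
def siegelMap : ℂ × ℂ → ℂ × ℂ :=
  fun p => (2 * p.1 + Complex.I * p.2 ^ 2, p.2)

lemma siegel_iter (n : ℕ) (p : ℂ × ℂ) :
    siegelMap^[n] p = ((2:ℂ)^n * p.1 + ((2:ℂ)^n - 1) * Complex.I * p.2^2, p.2) := by
  induction n with
  | zero => simp
  | succ n ih =>
    rw [Function.iterate_succ_apply', ih, siegelMap]
    simp only [Prod.mk.injEq]
    refine ⟨by push_cast [pow_succ]; ring, trivial⟩

lemma mem_iter (n : ℕ) (p : ℂ × ℂ) :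
    p ∈ siegelMap^[n] '' Siegel2 ↔
      ((2:ℝ)^(n+1) - 1) * p.2.re^2 + p.2.im^2 < p.1.im := by
  have h2n : (1:ℝ) ≤ 2^n := one_le_pow₀ (by norm_num)
  constructor
  · rintro ⟨q, hq, rfl⟩
    rw [siegel_iter]
    simp only [Siegel2, Set.mem_setOf_eq] at hq
    have habs : ‖q.2‖ ^ 2 = q.2.re^2 + q.2.im^2 := by
      rw [Complex.sq_norm, Complex.normSq_apply]; ring
    rw [habs] at hq
    simp only [Complex.add_im, Complex.mul_im, Complex.mul_re, Complex.I_re, Complex.I_im,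
      Complex.sub_re, Complex.sub_im, Complex.one_re, Complex.one_im]
    have hre : ((2:ℂ)^n).re = (2:ℝ)^n := by
      norm_cast
    have him : ((2:ℂ)^n).im = 0 := by norm_cast
    have hsq_re : (q.2^2).re = q.2.re^2 - q.2.im^2 := by
      rw [sq, Complex.mul_re]; ring
    have hsq_im : (q.2^2).im = 2 * q.2.re * q.2.im := by
      rw [sq, Complex.mul_im]; ring
    rw [hre, him, hsq_re, hsq_im]
    have : (2:ℝ)^(n+1) = 2 * 2^n := by ring
    rw [this]
    nlinarith [sq_nonneg q.2.re, sq_nonneg q.2.im]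
  · intro h
    refine ⟨((p.1 - ((2:ℂ)^n - 1) * Complex.I * p.2^2) / 2^n, p.2), ?_, ?_⟩
    · simp only [Siegel2, Set.mem_setOf_eq]
      have habs : ‖p.2‖ ^ 2 = p.2.re^2 + p.2.im^2 := by
        rw [Complex.sq_norm, Complex.normSq_apply]; ring
      rw [habs]
      have hcast : ((2:ℂ)^n) = (((2:ℝ)^n : ℝ) : ℂ) := by push_cast; ring
      have hsq_re : (p.2^2).re = p.2.re^2 - p.2.im^2 := by
        rw [sq, Complex.mul_re]; ring
      have him : ((p.1 - ((2:ℂ)^n - 1) * Complex.I * p.2^2) / 2^n).im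
          = (p.1.im - ((2:ℝ)^n - 1) * (p.2.re^2 - p.2.im^2)) / 2^n := by
        rw [hcast, Complex.div_ofReal_im]
        congr 1
        simp only [Complex.sub_im, Complex.mul_im, Complex.mul_re, Complex.I_re,
          Complex.I_im, Complex.sub_re, Complex.one_re, Complex.one_im, hcast,
          Complex.ofReal_re, Complex.ofReal_im, hsq_re]
        ring
      rw [him]
      rw [lt_div_iff₀ (by positivity)]
      have : (2:ℝ)^(n+1) = 2 * 2^n := by ring
      rw [this] at h
      nlinarith
    · rw [siegel_iter]
      have h2 : ((2:ℂ)^n) ≠ 0 := pow_ne_zero _ two_ne_zero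
      apply Prod.ext
      · show (2:ℂ)^n * _ + _ = p.1
        field_simp
        ring
      · rfl

/-- The invariant set of `f(z,w) = (2z + i w², w)` on the Siegel upper half-space is
`ℍ² ∩ {Re w = 0}`. -/
theorem stmt_12 :
    (⋂ n : ℕ, siegelMap^[n] '' Siegel2) =
      {p : ℂ × ℂ | ‖p.2‖ ^ 2 < p.1.im ∧ p.2.re = 0} := by
  ext p
  simp only [Set.mem_iInter, Set.mem_setOf_eq, mem_iter]
  have habs : ‖p.2‖ ^ 2 = p.2.re^2 + p.2.im^2 := by
    rw [Complex.sq_norm, Complex.normSq_apply]; ring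
  rw [habs]
  constructor
  · intro h
    have h0 := h 0
    norm_num at h0
    have hre : p.2.re = 0 := by
      by_contra hne
      have ha : 0 < p.2.re^2 := by positivity
      obtain ⟨m, hm⟩ := pow_unbounded_of_one_lt ((p.1.im - p.2.im^2)/p.2.re^2 + 1) (by norm_num : (1:ℝ) < 2)
      have hh := h m
      have h2m : (2:ℝ)^(m+1) ≥ 2^m := by
        apply pow_le_pow_right₀ (by norm_num); omega
      rw [div_add' _ _ _ (ne_of_gt ha), div_lt_iff₀ ha] at hm
      nlinarith
    refine ⟨?_, hre⟩
    nlinarith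
  · rintro ⟨h, hre⟩ n
    rw [hre]
    have : (0:ℝ) ≤ (2:ℝ)^(n+1) - 1 := by
      have : (1:ℝ) ≤ 2^(n+1) := one_le_pow₀ (by norm_num)
      linarith
    nlinarith
end

section
/- Let f(z,w) = (2z + i w², w) and, for r ∈ ℝ, let h_r(z,w) = (z + i r² − 2 r w, w − i r). Then h_r ∘ f = f ∘ h_r as maps of ℂ² (equivalently h_r ∘ f ∘ h_r^{-1} = f), and h_r restricts to a bijection of the Siegel upper half-space ℍ² = {(z,w) ∈ ℂ² : Im z > |w|²} onto itself. -/
/-- The affine map `h_r(z,w) = (z + i r² − 2 r w, w − i r)`. -/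
def siegelAff (r : ℝ) : ℂ × ℂ → ℂ × ℂ :=
  fun p => (p.1 + Complex.I * (r : ℂ) ^ 2 - 2 * (r : ℂ) * p.2, p.2 - Complex.I * (r : ℂ))

lemma siegelAff_key (r : ℝ) (p : ℂ × ℂ) :
    ((siegelAff r p).1).im - ‖(siegelAff r p).2‖ ^ 2
      = p.1.im - ‖p.2‖ ^ 2 := by
  simp only [siegelAff, Complex.sq_norm, Complex.normSq_apply, Complex.add_im,
    Complex.sub_im, Complex.sub_re, Complex.mul_im, Complex.mul_re,
    Complex.I_re, Complex.I_im, Complex.ofReal_re, Complex.ofReal_im,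
    Complex.add_re, Complex.re_ofNat, Complex.im_ofNat, ← Complex.ofReal_pow]
  push_cast
  ring

lemma siegelAff_inv (r : ℝ) (p : ℂ × ℂ) :
    siegelAff r (siegelAff (-r) p) = p := by
  simp only [siegelAff]
  push_cast
  ext <;> simp <;> ring

lemma siegelAff_mem (r : ℝ) {p : ℂ × ℂ} (hp : p ∈ Siegel2) :
    siegelAff r p ∈ Siegel2 := by
  have := siegelAff_key r p
  simp only [Siegel2, Set.mem_setOf_eq] at hp ⊢
  linarith

/-- `h_r` commutes with `f` and restricts to a bijection of the Siegel upper
half-space onto itself. -/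
theorem stmt_13 (r : ℝ) :
    siegelAff r ∘ siegelMap = siegelMap ∘ siegelAff r ∧
    Set.BijOn (siegelAff r) Siegel2 Siegel2 := by
  constructor
  · funext p
    simp only [Function.comp, siegelAff, siegelMap]
    refine Prod.ext ?_ rfl
    simp only
    linear_combination (2 * (r : ℂ) * p.2 - Complex.I * (r : ℂ) ^ 2) * Complex.I_sq
  · refine ⟨fun p hp => siegelAff_mem r hp, ?_, ?_⟩
    · intro p _ q _ h
      have h1 := congrArg Prod.fst h
      have h2 := congrArg Prod.snd h
      simp only [siegelAff] at h1 h2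
      have hw : p.2 = q.2 := by linear_combination h2
      have hz : p.1 = q.1 := by linear_combination h1 + 2 * (r : ℂ) * hw
      exact Prod.ext hz hw
    · intro q hq
      exact ⟨siegelAff (-r) q, siegelAff_mem (-r) hq, siegelAff_inv r q⟩
end

section
/- Let θ ∈ ℝ with −π/2 < θ < π/2 and let t ∈ ℝ with t ≥ 1. Then Re(e^{−2iθ} + 1) ≤ |e^{−2iθ} + t| − (t − 1) ≤ |e^{−2iθ} + 1|, where |·| denotes the complex modulus. In particular |e^{−2iθ} + t| − (t − 1) ≥ 1 + cos(2θ) > 0. -/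
open Real

/-- For `|θ| < π/2` and `t ≥ 1`:
`Re(e^{−2iθ} + 1) ≤ |e^{−2iθ} + t| − (t − 1) ≤ |e^{−2iθ} + 1|`, and in particular
`|e^{−2iθ} + t| − (t − 1) ≥ 1 + cos 2θ > 0`. -/
theorem stmt_17 (θ t : ℝ) (hθ₁ : -(π / 2) < θ) (hθ₂ : θ < π / 2) (ht : 1 ≤ t) :
    (Complex.exp (-2 * θ * Complex.I) + 1).re ≤
      ‖Complex.exp (-2 * θ * Complex.I) + (t : ℂ)‖ - (t - 1) ∧
    ‖Complex.exp (-2 * θ * Complex.I) + (t : ℂ)‖ - (t - 1) ≤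
      ‖Complex.exp (-2 * θ * Complex.I) + 1‖ ∧
    1 + Real.cos (2 * θ) ≤
      ‖Complex.exp (-2 * θ * Complex.I) + (t : ℂ)‖ - (t - 1) ∧
    0 < 1 + Real.cos (2 * θ) := by
  set z : ℂ := Complex.exp (-2 * θ * Complex.I) with hz
  have hre : z.re = Real.cos (2 * θ) := by
    have : (-2 * (θ:ℂ) * Complex.I) = ((-(2*θ) : ℝ) : ℂ) * Complex.I := by
      push_cast; ring
    rw [hz, this, Complex.exp_ofReal_mul_I_re, Real.cos_neg]
  have h1 : (z + (t:ℂ)).re ≤ ‖z + (t:ℂ)‖ := Complex.re_le_norm _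
  have hre_t : (z + (t:ℂ)).re = Real.cos (2 * θ) + t := by
    simp [hre]
  have hre_1 : (z + 1).re = Real.cos (2 * θ) + 1 := by simp [hre]
  have key : 1 + Real.cos (2 * θ) ≤ ‖z + (t:ℂ)‖ - (t - 1) := by
    rw [hre_t] at h1; linarith
  have tri : ‖z + (t:ℂ)‖ - (t - 1) ≤ ‖z + 1‖ := by
    have heq : z + (t:ℂ) = (z + 1) + ((t - 1 : ℝ) : ℂ) := by push_cast; ring
    have h2 : ‖z + (t:ℂ)‖ ≤ ‖z + 1‖ + (t - 1) := by
      rw [heq]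
      calc ‖(z + 1) + ((t-1:ℝ):ℂ)‖ ≤ ‖z + 1‖ + ‖((t-1:ℝ):ℂ)‖ :=
            norm_add_le _ _
        _ = ‖z + 1‖ + (t - 1) := by
            rw [Complex.norm_real, Real.norm_eq_abs, abs_of_nonneg (by linarith)]
    linarith
  have hcθ : 0 < Real.cos θ := Real.cos_pos_of_mem_Ioo ⟨hθ₁, hθ₂⟩
  have hpos : 0 < 1 + Real.cos (2 * θ) := by
    rw [Real.cos_two_mul]; nlinarith
  exact ⟨by rw [hre_1]; linarith, tri, key, hpos⟩
end
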